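/- Let m_a > 0, m_d ≥ 0, α ∈ (0,1), and w¹, w², d¹, d² ≥ 0 with w¹+d¹ ≤ 1 and w²+d² ≤ 1. Define the stochastic-switching mean matrices M(1) := [[m_a, m_d], [w¹, 1−w¹−d¹]] and M(2) := [[α·m_a, α·m_d], [w², 1−w²−d²]], and assume det M(1) = 0 and det M(2) = 0. Then, ℙ-almost surely, (1/n) · log‖M(I_1)·M(I_2)·…·M(I_n)‖ converges, as n → ∞, to ( s₂·log( m_a + w¹·m_d/m_a ) + s₁·log( α·m_a + w²·m_d/m_a ) ) / (s₁+s₂). -/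

import Mathlib

open MeasureTheory Filter Topology

/-- The entrywise sum-of-absolute-values "norm" of a real matrix. -/
noncomputable def matNorm {m n : Type*} [Fintype m] [Fintype n] (M : Matrix m n ℝ) : ℝ :=
  ∑ i, ∑ j, |M i j|

/-- The stationary distribution π = (s₂/(s₁+s₂), s₁/(s₁+s₂)) of the binary environment
(environment state "1" is index 0, state "2" is index 1). -/
noncomputable def envPi (s : Fin 2 → ℝ) : Fin 2 → ℝ :=
  ![s 1 / (s 0 + s 1), s 0 / (s 0 + s 1)]

/-- The transition matrix P of the binary environment. -/
noncomputable def envP (s : Fin 2 → ℝ) : Matrix (Fin 2) (Fin 2) ℝ :=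
  !![1 - s 0, s 0; s 1, 1 - s 1]


set_option linter.unusedSectionVars false
set_option maxHeartbeats 1000000


private lemma limsup_le_limsup_of_sub_tendsto {u v : ℕ → ℝ} {C : ℝ}
    (hv : ∀ n, |v n| ≤ C) (h : Filter.Tendsto (fun n => u n - v n) atTop (𝓝 0)) :
    Filter.limsup u atTop ≤ Filter.limsup v atTop := by
  have hvb : IsBoundedUnder (· ≤ ·) atTop v :=
    isBoundedUnder_of ⟨C, fun n => (abs_le.1 (hv n)).2⟩
  refine le_of_forall_pos_le_add fun ε hε => ?_
  have h1 : ∀ᶠ n in atTop, v n < Filter.limsup v atTop + ε / 2 := by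
    refine eventually_lt_of_limsup_lt ?_ hvb
    linarith [Filter.limsup_le_of_le (isCoboundedUnder_le_of_le atTop
      (fun n => (abs_le.1 (hv n)).1)) (Eventually.of_forall fun n => (abs_le.1 (hv n)).2)]
  have h2 : ∀ᶠ n in atTop, |u n - v n| < ε / 2 := by
    have := (Metric.tendsto_nhds.1 h) (ε / 2) (by linarith)
    simpa [Real.dist_eq] using this
  have h3 : ∀ᶠ n in atTop, u n ≤ Filter.limsup v atTop + ε := by
    filter_upwards [h1, h2] with n hn1 hn2
    have := abs_lt.1 hn2
    linarith
  refine Filter.limsup_le_of_le ?_ h3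
  refine isCoboundedUnder_le_of_eventually_le atTop (x := -C - ε) ?_
  filter_upwards [h2] with n hn
  have := abs_lt.1 hn
  have := abs_le.1 (hv n)
  linarith

private lemma limsup_eq_limsup_of_sub_tendsto {u v : ℕ → ℝ} {C : ℝ}
    (hu : ∀ n, |u n| ≤ C) (hv : ∀ n, |v n| ≤ C)
    (h : Filter.Tendsto (fun n => u n - v n) atTop (𝓝 0)) :
    Filter.limsup u atTop = Filter.limsup v atTop := by
  refine le_antisymm (limsup_le_limsup_of_sub_tendsto hv h) (limsup_le_limsup_of_sub_tendsto hu ?_)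
  have : Filter.Tendsto (fun n => -(u n - v n)) atTop (𝓝 (-0)) := h.neg
  simpa [neg_sub] using this


section Birkhoff

variable {Ω : Type*} [MeasurableSpace Ω] {μ : MeasureTheory.Measure Ω} {T : Ω → Ω} {f : Ω → ℝ} {C : ℝ}

/-- `maxBSum T f N ω = max (0, S₁ ω, …, S_N ω)` where `Sₙ` are Birkhoff sums. -/
noncomputable def maxBSum (T : Ω → Ω) (f : Ω → ℝ) : ℕ → Ω → ℝ
  | 0 => fun _ => 0
  | (N + 1) => fun ω => max (maxBSum T f N ω) (birkhoffSum T f (N + 1) ω)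

lemma maxBSum_nonneg : ∀ N ω, 0 ≤ maxBSum T f N ω := by
  intro N
  induction N with
  | zero => intro ω; simp [maxBSum]
  | succ n ih => intro ω; exact le_trans (ih ω) (le_max_left _ _)

lemma maxBSum_mono {N N' : ℕ} (h : N ≤ N') (ω : Ω) : maxBSum T f N ω ≤ maxBSum T f N' ω := by
  induction N' with
  | zero => obtain rfl : N = 0 := Nat.le_zero.1 h; exact le_rfl
  | succ n ih =>
    rcases Nat.eq_or_lt_of_le h with rfl | hlt
    · exact le_rfl
    · exact le_trans (ih (Nat.lt_succ_iff.1 hlt)) (le_max_left _ _)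

lemma birkhoffSum_le_maxBSum : ∀ {n N : ℕ}, n ≤ N → ∀ ω : Ω,
    birkhoffSum T f n ω ≤ maxBSum T f N ω := by
  intro n N
  induction N with
  | zero => intro h ω; obtain rfl : n = 0 := Nat.le_zero.1 h; simp [birkhoffSum, maxBSum]
  | succ m ih =>
    intro h ω
    rcases Nat.eq_or_lt_of_le h with rfl | hlt
    · exact le_max_right _ _
    · exact le_trans (ih (Nat.lt_succ_iff.1 hlt) ω) (le_max_left _ _)

lemma birkhoffSum_measurable (hT : Measurable T) (hf : Measurable f) (n : ℕ) :
    Measurable (birkhoffSum T f n) := by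
  apply Finset.measurable_sum
  intro k _
  exact hf.comp (hT.iterate k)

lemma maxBSum_measurable (hT : Measurable T) (hf : Measurable f) (N : ℕ) :
    Measurable (maxBSum T f N) := by
  induction N with
  | zero => simpa [maxBSum] using measurable_const
  | succ n ih => exact ih.max (birkhoffSum_measurable hT hf (n + 1))

lemma maxBSum_key (N : ℕ) (ω : Ω) :
    maxBSum T f N ω ≤ max 0 (f ω + maxBSum T f N (T ω)) := by
  induction N with
  | zero => simp [maxBSum]
  | succ n ih =>
    refine max_le ?_ ?_
    · exact le_trans ih (max_le_max le_rfl
        (add_le_add le_rfl (maxBSum_mono (Nat.le_succ n) (T ω))))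
    · rw [birkhoffSum_succ']
      exact le_trans (le_max_right 0 _)
        (max_le_max le_rfl (add_le_add le_rfl (birkhoffSum_le_maxBSum (Nat.le_succ n) (T ω))))

lemma birkhoffSum_abs_le (hC : ∀ ω, |f ω| ≤ C) (n : ℕ) (ω : Ω) :
    |birkhoffSum T f n ω| ≤ n * C := by
  calc |birkhoffSum T f n ω| ≤ ∑ k ∈ Finset.range n, |f (T^[k] ω)| :=
        Finset.abs_sum_le_sum_abs _ _
    _ ≤ ∑ _k ∈ Finset.range n, C := Finset.sum_le_sum fun k _ => hC _
    _ = n * C := by simp [mul_comm]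

lemma maxBSum_abs_le (hC : ∀ ω, |f ω| ≤ C) (N : ℕ) (ω : Ω) :
    |maxBSum T f N ω| ≤ N * C := by
  have hC0 : 0 ≤ C := le_trans (abs_nonneg _) (hC ω)
  induction N with
  | zero => simp [maxBSum]
  | succ n ih =>
    rw [abs_of_nonneg (maxBSum_nonneg _ _)] at ih ⊢
    refine max_le (le_trans ih ?_) (le_trans (le_abs_self _)
      (birkhoffSum_abs_le hC (n+1) ω))
    push_cast; nlinarith
    
lemma integrable_of_bounded' (hμ : IsFiniteMeasure μ) (hg : Measurable f) (hC : ∀ ω, |f ω| ≤ C) :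
    MeasureTheory.Integrable f μ :=
  ⟨hg.aestronglyMeasurable, HasFiniteIntegral.of_bounded (C := C)
    (Filter.Eventually.of_forall fun ω => by simpa [Real.norm_eq_abs] using hC ω)⟩

/-- The maximal ergodic theorem. -/
lemma maximal_ergodic (hT : MeasureTheory.MeasurePreserving T μ μ) [IsProbabilityMeasure μ]
    (hf : Measurable f) (hC : ∀ ω, |f ω| ≤ C) (N : ℕ) :
    0 ≤ ∫ ω in {ω | 0 < maxBSum T f N ω}, f ω ∂μ := by
  set A := {ω | 0 < maxBSum T f N ω} with hA
  have hAmeas : MeasurableSet A := measurableSet_lt measurable_const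
    (maxBSum_measurable hT.measurable hf N)
  have hm : Measurable (maxBSum T f N) := maxBSum_measurable hT.measurable hf N
  have hmT : Measurable (fun ω => maxBSum T f N (T ω)) := hm.comp hT.measurable
  have hint_m : MeasureTheory.Integrable (maxBSum T f N) μ :=
    integrable_of_bounded' inferInstance hm (maxBSum_abs_le hC N)
  have hint_mT : MeasureTheory.Integrable (fun ω => maxBSum T f N (T ω)) μ := by
    refine integrable_of_bounded' inferInstance hmT (C := N * C) fun ω => maxBSum_abs_le hC N (T ω)
  have hint_f : MeasureTheory.Integrable f μ := integrable_of_bounded' inferInstance hf hC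
  -- key pointwise inequality on A
  have hkey : ∀ ω ∈ A, maxBSum T f N ω - maxBSum T f N (T ω) ≤ f ω := by
    intro ω hω
    have h := maxBSum_key (T := T) (f := f) N ω
    rcases le_max_iff.1 h with h0 | h1
    · exact absurd (lt_of_lt_of_le hω h0) (lt_irrefl 0)
    · linarith
  have step1 : ∫ ω in A, (maxBSum T f N ω - maxBSum T f N (T ω)) ∂μ ≤ ∫ ω in A, f ω ∂μ := by
    refine MeasureTheory.setIntegral_mono_on ((hint_m.sub hint_mT).integrableOn)
      (hint_f.integrableOn) hAmeas hkey
  have e1 : ∫ ω in A, maxBSum T f N ω ∂μ = ∫ ω, maxBSum T f N ω ∂μ := by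
    rw [← MeasureTheory.integral_add_compl hAmeas hint_m]
    have : ∫ ω in Aᶜ, maxBSum T f N ω ∂μ = 0 := by
      refine MeasureTheory.setIntegral_eq_zero_of_forall_eq_zero fun ω hω => ?_
      have h1 : ¬ (0 < maxBSum T f N ω) := hω
      linarith [maxBSum_nonneg (T := T) (f := f) N ω, not_lt.1 h1]
    rw [this, add_zero]
  have e2 : ∫ ω, maxBSum T f N (T ω) ∂μ = ∫ ω, maxBSum T f N ω ∂μ := by
    rw [← MeasureTheory.integral_map hT.measurable.aemeasurable hm.aestronglyMeasurable, hT.map_eq]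
  have e3 : ∫ ω in A, maxBSum T f N (T ω) ∂μ ≤ ∫ ω, maxBSum T f N ω ∂μ := by
    rw [← e2]
    exact MeasureTheory.setIntegral_le_integral hint_mT
      (Filter.Eventually.of_forall fun ω => maxBSum_nonneg N (T ω))
  have step2 : 0 ≤ ∫ ω in A, (maxBSum T f N ω - maxBSum T f N (T ω)) ∂μ := by
    rw [MeasureTheory.integral_sub hint_m.integrableOn hint_mT.integrableOn, e1]
    linarith
  linarith


lemma birkhoffAvg_abs_le (hC0 : 0 ≤ C) (hC : ∀ ω, |f ω| ≤ C) (n : ℕ) (ω : Ω) :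
    |birkhoffSum T f n ω / n| ≤ C := by
  rcases Nat.eq_zero_or_pos n with rfl | hn
  · simpa [birkhoffSum] using hC0
  · rw [abs_div, abs_of_nonneg (by positivity : (0:ℝ) ≤ (n:ℝ))]
    rw [div_le_iff₀ (by exact_mod_cast hn)]
    calc |birkhoffSum T f n ω| ≤ ∑ k ∈ Finset.range n, |f (T^[k] ω)| :=
          Finset.abs_sum_le_sum_abs _ _
      _ ≤ ∑ _k ∈ Finset.range n, C := Finset.sum_le_sum fun k _ => hC _
      _ = C * n := by simp [mul_comm]

lemma birkhoff_limsup [IsProbabilityMeasure μ] (hT : Ergodic T μ) (hf : Measurable f)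
    (hC0 : 0 ≤ C) (hC : ∀ ω, |f ω| ≤ C) :
    ∃ c : ℝ, c ≤ ∫ ω, f ω ∂μ ∧
      ∀ᵐ ω ∂μ, Filter.limsup (fun n => birkhoffSum T f n ω / n) atTop = c := by
  have hTm : Measurable T := hT.toMeasurePreserving.measurable
  set L : Ω → ℝ := fun ω => Filter.limsup (fun n => birkhoffSum T f n ω / n) atTop with hL
  have hAbd : ∀ n ω, |birkhoffSum T f n ω / n| ≤ C := birkhoffAvg_abs_le hC0 hC
  have hLmeas : Measurable L :=
    Measurable.limsup fun n => (birkhoffSum_measurable hTm hf n).div_const _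
  have hLinv : ∀ ω, L (T ω) = L ω := by
    intro ω
    refine limsup_eq_limsup_of_sub_tendsto (C := C) (fun n => hAbd n (T ω)) (fun n => hAbd n ω) ?_
    have key : ∀ n : ℕ, birkhoffSum T f n (T ω) = birkhoffSum T f n ω + f (T^[n] ω) - f ω := by
      intro n
      have h1 := birkhoffSum_succ T f n ω
      have h2 := birkhoffSum_succ' T f n ω
      linarith
    refine squeeze_zero_norm (a := fun n : ℕ => 2 * C / n) (fun n => ?_)
      (tendsto_const_div_atTop_nhds_zero_nat (2 * C))
    rcases Nat.eq_zero_or_pos n with rfl | hn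
    · simp
    · rw [key n, Real.norm_eq_abs]
      have heq : (birkhoffSum T f n ω + f (T^[n] ω) - f ω) / n - birkhoffSum T f n ω / n
          = (f (T^[n] ω) - f ω) / n := by ring
      rw [heq, abs_div, abs_of_nonneg (by positivity : (0:ℝ) ≤ (n:ℝ))]
      refine div_le_div_of_nonneg_right ?_ (by positivity)
      calc |f (T^[n] ω) - f ω| ≤ |f (T^[n] ω)| + |f ω| := abs_sub _ _
        _ ≤ 2 * C := by linarith [hC (T^[n] ω), hC ω]
  obtain ⟨c, hc⟩ := hT.ae_eq_const_of_ae_eq_comp₀ hLmeas.nullMeasurable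
    (Filter.Eventually.of_forall fun ω => hLinv ω)
  refine ⟨c, ?_, hc⟩
  -- show c ≤ ∫ f
  refine le_of_forall_pos_le_add fun ε hε => ?_
  set g : Ω → ℝ := fun ω => f ω - (c - ε) with hgdef
  have hgmeas : Measurable g := hf.sub measurable_const
  have hgbd : ∀ ω, |g ω| ≤ C + |c - ε| := fun ω =>
    (abs_sub _ _).trans (add_le_add (hC ω) le_rfl)
  have hSg : ∀ (n : ℕ) (ω : Ω), birkhoffSum T g n ω = birkhoffSum T f n ω - n * (c - ε) := by
    intro n ω
    simp [birkhoffSum, hgdef, Finset.sum_sub_distrib, mul_comm]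
    ring
  -- a.e. ω belongs to the union of the maximal sets
  set A : ℕ → Set Ω := fun N => {ω | 0 < maxBSum T g N ω} with hAdef
  have hAmeas : ∀ N, MeasurableSet (A N) := fun N =>
    measurableSet_lt measurable_const (maxBSum_measurable hTm hgmeas N)
  have hAmono : Monotone A := fun N N' h ω hω =>
    lt_of_lt_of_le hω (maxBSum_mono h ω)
  have hae : ∀ᵐ ω ∂μ, ω ∈ ⋃ N, A N := by
    filter_upwards [hc] with ω hω
    by_contra hcon
    simp only [Set.mem_iUnion, not_exists, hAdef, Set.mem_setOf_eq, not_lt] at hcon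
    have hallS : ∀ n : ℕ, birkhoffSum T g n ω ≤ 0 := fun n =>
      (birkhoffSum_le_maxBSum (le_refl n) ω).trans (hcon n)
    have hlimle : Filter.limsup (fun n => birkhoffSum T f n ω / n) atTop ≤ c - ε := by
      refine Filter.limsup_le_of_le (isCoboundedUnder_le_of_le atTop
        (fun n => (abs_le.1 (birkhoffAvg_abs_le hC0 hC n ω)).1)) ?_
      filter_upwards [eventually_ge_atTop 1] with n hn
      have h1 : birkhoffSum T f n ω ≤ n * (c - ε) := by
        have := hallS n; rw [hSg] at this; linarith
      rw [div_le_iff₀ (by exact_mod_cast hn : (0:ℝ) < (n:ℝ))]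
      linarith [h1]
    have hLω : Filter.limsup (fun n => birkhoffSum T f n ω / (n:ℝ)) atTop = c := hω
    linarith
  have hgint : MeasureTheory.Integrable g μ :=
    integrable_of_bounded' inferInstance hgmeas hgbd
  have htend := MeasureTheory.tendsto_setIntegral_of_monotone hAmeas hAmono hgint.integrableOn
  have hUge : 0 ≤ ∫ ω in ⋃ N, A N, g ω ∂μ :=
    ge_of_tendsto htend (Filter.Eventually.of_forall fun N =>
      maximal_ergodic hT.toMeasurePreserving hgmeas hgbd N)
  have hUeq : ∫ ω in ⋃ N, A N, g ω ∂μ = ∫ ω, g ω ∂μ := by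
    have h1 : (⋃ N, A N) =ᵐ[μ] (Set.univ : Set Ω) := by
      rw [Filter.eventuallyEq_set]
      filter_upwards [hae] with ω hω
      simp [hω]
    rw [MeasureTheory.setIntegral_congr_set h1, MeasureTheory.setIntegral_univ]
  have hgi : ∫ ω, g ω ∂μ = (∫ ω, f ω ∂μ) - (c - ε) := by
    rw [hgdef]
    rw [MeasureTheory.integral_sub (integrable_of_bounded' inferInstance hf hC)
      (MeasureTheory.integrable_const _)]
    simp
  rw [hUeq, hgi] at hUge
  linarith

theorem birkhoff_ergodic [IsProbabilityMeasure μ] (hT : Ergodic T μ) (hf : Measurable f)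
    (hC0 : 0 ≤ C) (hC : ∀ ω, |f ω| ≤ C) :
    ∀ᵐ ω ∂μ, Filter.Tendsto (fun n => birkhoffSum T f n ω / n) atTop
      (𝓝 (∫ ω, f ω ∂μ)) := by
  obtain ⟨c₁, hc₁, h₁⟩ := birkhoff_limsup hT hf hC0 hC
  obtain ⟨c₂, hc₂, h₂⟩ := birkhoff_limsup hT (hf.neg) hC0
    (f := fun ω => -f ω) (fun ω => by simpa using hC ω)
  have hneg : ∀ (n : ℕ) (ω : Ω), birkhoffSum T (fun x => -f x) n ω = -birkhoffSum T f n ω := by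
    intro n ω; simp [birkhoffSum]
  have hintneg : ∫ ω, -f ω ∂μ = -∫ ω, f ω ∂μ := by
    rw [← MeasureTheory.integral_neg]
  filter_upwards [h₁, h₂] with ω hω₁ hω₂
  refine tendsto_order.2 ⟨?_, ?_⟩
  · intro a ha
    have hlt : Filter.limsup (fun n => birkhoffSum T (fun x => -f x) n ω / n) atTop < -a := by
      rw [hω₂]
      have : c₂ ≤ -∫ ω, f ω ∂μ := by rw [← hintneg]; exact hc₂
      linarith
    have hev := eventually_lt_of_limsup_lt hlt (isBoundedUnder_of
      ⟨C, fun n => (abs_le.1 (birkhoffAvg_abs_le hC0 (fun ω => by simpa using hC ω) n ω)).2⟩)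
    filter_upwards [hev] with n hn
    rw [hneg, neg_div] at hn
    linarith
  · intro a ha
    have hlt : Filter.limsup (fun n => birkhoffSum T f n ω / n) atTop < a := by
      rw [hω₁]; linarith
    exact eventually_lt_of_limsup_lt hlt (isBoundedUnder_of
      ⟨C, fun n => (abs_le.1 (birkhoffAvg_abs_le hC0 hC n ω)).2⟩)

end Birkhoff

lemma matNorm_smul (r : ℝ) (A : Matrix (Fin 2) (Fin 2) ℝ) (hr : 0 ≤ r) :
    matNorm (r • A) = r * matNorm A := by
  simp [matNorm, Matrix.smul_apply, abs_mul, abs_of_nonneg hr, Finset.mul_sum]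
  ring

lemma rankOne_mul (u : Fin 2 → Fin 2 → ℝ) (v : Fin 2 → ℝ) (lam : Fin 2 → ℝ)
    (hlam : ∀ j, lam j = v 0 * u j 0 + v 1 * u j 1) (i j : Fin 2) :
    (Matrix.of fun a b => u i a * v b) * (Matrix.of fun a b => u j a * v b)
      = lam j • (Matrix.of fun a b => u i a * v b) := by
  ext a b
  simp [Matrix.mul_apply, Fin.sum_univ_two, hlam]
  ring

lemma rankOne_list_prod (u : Fin 2 → Fin 2 → ℝ) (v : Fin 2 → ℝ) (lam : Fin 2 → ℝ)
    (hlam : ∀ j, lam j = v 0 * u j 0 + v 1 * u j 1) :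
    ∀ (l : List (Fin 2)) (i : Fin 2),
      ((i :: l).map (fun i => (Matrix.of fun a b => u i a * v b : Matrix (Fin 2) (Fin 2) ℝ))).prod
        = (l.map lam).prod • (Matrix.of fun a b => u i a * v b) := by
  intro l
  induction l with
  | nil => intro i; simp
  | cons j l ih =>
    intro i
    rw [List.map_cons, List.prod_cons, ih j, List.map_cons, List.prod_cons]
    rw [Matrix.mul_smul, rankOne_mul u v lam hlam i j, smul_smul, mul_comm]

lemma list_prod_range_eq_finset (n : ℕ) (f : ℕ → ℝ) :
    ((List.range n).map f).prod = ∏ i ∈ Finset.range n, f i := by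
  induction n with
  | zero => simp
  | succ m ih => rw [List.range_succ, Finset.prod_range_succ, List.map_append, List.prod_append, ih]; simp


private lemma fin2cases : ∀ x : Fin 2, x = 0 ∨ x = 1 := by decide

/-- Lyapunov exponent of the stochastic switcher with vanishing determinants. -/
theorem stochastic_switcher_lyapunov
    {Ω : Type*} [MeasurableSpace Ω] (μ : Measure Ω) [IsProbabilityMeasure μ]
    (T : Ω → Ω) (hT : Ergodic T μ) (e : Ω → Fin 2) (he : Measurable e)
    (s : Fin 2 → ℝ) (hs : ∀ i, s i ∈ Set.Ioc (0 : ℝ) 1) (hss : s 0 * s 1 < 1)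
    (henv : ∀ i j : Fin 2, μ {ω | e ω = i ∧ e (T ω) = j}
      = ENNReal.ofReal (envPi s i * envP s i j))
    (ma md α w1 w2 d1 d2 : ℝ) (hma : 0 < ma) (hmd : 0 ≤ md) (hα : α ∈ Set.Ioo (0 : ℝ) 1)
    (hw1 : 0 ≤ w1) (hw2 : 0 ≤ w2) (hd1 : 0 ≤ d1) (hd2 : 0 ≤ d2)
    (hwd1 : w1 + d1 ≤ 1) (hwd2 : w2 + d2 ≤ 1)
    (M : Fin 2 → Matrix (Fin 2) (Fin 2) ℝ)
    (hM : M = ![!![ma, md; w1, 1 - w1 - d1], !![α * ma, α * md; w2, 1 - w2 - d2]])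
    (hdet1 : (M 0).det = 0) (hdet2 : (M 1).det = 0) :
    ∀ᵐ ω ∂μ, Tendsto (fun n : ℕ =>
        Real.log (matNorm (((List.range n).map (fun k => M (e (T^[k+1] ω)))).prod)) / n)
      atTop (𝓝 ((s 1 * Real.log (ma + w1 * (md / ma))
        + s 0 * Real.log (α * ma + w2 * (md / ma))) / (s 0 + s 1))) := by
  have hTm : Measurable T := hT.toMeasurePreserving.measurable
  have hma' : ma ≠ 0 := ne_of_gt hma
  have hα0 := hα.1
  -- determinant consequences
  have hdet1m : ma * (1 - w1 - d1) = md * w1 := by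
    rw [hM] at hdet1
    simp [Matrix.det_fin_two_of] at hdet1
    linarith
  have hdet2m : ma * (1 - w2 - d2) = md * w2 := by
    rw [hM] at hdet2
    simp [Matrix.det_fin_two_of] at hdet2
    have hα' : α ≠ 0 := ne_of_gt hα0
    nlinarith [hdet2, hα0]
  have hdet1' : 1 - w1 - d1 = w1 * (md / ma) := by
    field_simp
    linarith [hdet1m]
  have hdet2' : 1 - w2 - d2 = w2 * (md / ma) := by
    field_simp
    linarith [hdet2m]
  set v : Fin 2 → ℝ := ![1, md / ma] with hv
  set uu : Fin 2 → Fin 2 → ℝ := ![![ma, w1], ![α * ma, w2]] with huu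
  set lam : Fin 2 → ℝ := ![ma + w1 * (md / ma), α * ma + w2 * (md / ma)] with hlamdef
  have hlam : ∀ j, lam j = v 0 * uu j 0 + v 1 * uu j 1 := by
    intro j; fin_cases j <;> simp [hv, huu, hlamdef] <;> ring
  have hMR : ∀ i, M i = Matrix.of fun a b => uu i a * v b := by
    intro i
    fin_cases i <;> ext a b <;> fin_cases a <;> fin_cases b <;>
      simp [hM, hv, huu, Matrix.of_apply] <;> field_simp <;> linarith [hdet1m, hdet2m]
  have hmdma : 0 ≤ w1 * (md / ma) := mul_nonneg hw1 (div_nonneg hmd hma.le)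
  have hmdma2 : 0 ≤ w2 * (md / ma) := mul_nonneg hw2 (div_nonneg hmd hma.le)
  have hlampos : ∀ j, 0 < lam j := by
    intro j; fin_cases j <;> simp [hlamdef]
    · linarith
    · nlinarith
  set cN : Fin 2 → ℝ := fun i => matNorm (Matrix.of fun a b => uu i a * v b) with hcNdef
  have hcNpos : ∀ i, 0 < cN i := by
    intro i
    have hval : cN i = (uu i 0 + uu i 1) * (v 0 + v 1) := by
      have h0 : 0 ≤ uu i 0 := by fin_cases i <;> simp [huu] <;> positivity
      have h1 : 0 ≤ uu i 1 := by fin_cases i <;> simp [huu] <;> assumption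
      have hv0 : (0:ℝ) ≤ v 0 := by simp [hv]
      have hv1 : (0:ℝ) ≤ v 1 := by simp [hv]; positivity
      rw [hcNdef]
      simp only [matNorm, Fin.sum_univ_two, Matrix.of_apply, abs_mul,
        abs_of_nonneg h0, abs_of_nonneg h1, abs_of_nonneg hv0, abs_of_nonneg hv1]
      ring
    rw [hval]
    have h0 : 0 < uu i 0 := by fin_cases i <;> simp [huu] <;> positivity
    have h1 : 0 ≤ uu i 1 := by fin_cases i <;> simp [huu] <;> assumption
    have hv1 : (0:ℝ) ≤ v 1 := by simp [hv]; positivity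
    have hv0 : v 0 = 1 := by simp [hv]
    nlinarith
  -- the environment observable
  set g : Ω → ℝ := fun ω => Real.log (lam (e ω)) with hgdef
  have hgmeas : Measurable g := (measurable_of_countable (fun i => Real.log (lam i))).comp he
  set Cg : ℝ := |Real.log (lam 0)| + |Real.log (lam 1)| with hCgdef
  have hCg0 : 0 ≤ Cg := by positivity
  have hgbd : ∀ ω, |g ω| ≤ Cg := by
    intro ω
    rcases fin2cases (e ω) with h | h <;> rw [hgdef] <;> simp only [h] <;>
      [linarith [abs_nonneg (Real.log (lam 1))]; linarith [abs_nonneg (Real.log (lam 0))]]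
  -- measure of the environment states
  have hsum_pos : 0 < s 0 + s 1 := by linarith [(hs 0).1, (hs 1).1]
  have hπnn : ∀ i, 0 ≤ envPi s i := by
    intro i; fin_cases i <;> simp [envPi] <;>
      exact div_nonneg (by linarith [(hs 0).1, (hs 1).1]) (by linarith [(hs 0).1, (hs 1).1])
  have hPnn : ∀ i j, 0 ≤ envP s i j := by
    intro i j
    fin_cases i <;> fin_cases j <;> simp [envP] <;>
      linarith [(hs 0).1, (hs 1).1, (hs 0).2, (hs 1).2]
  have hpre : ∀ i : Fin 2, μ (e ⁻¹' {i}) = ENNReal.ofReal (envPi s i) := by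
    intro i
    have hsplit : e ⁻¹' {i} = {ω | e ω = i ∧ e (T ω) = 0} ∪ {ω | e ω = i ∧ e (T ω) = 1} := by
      ext ω
      simp only [Set.mem_preimage, Set.mem_singleton_iff, Set.mem_union, Set.mem_setOf_eq]
      constructor
      · intro h
        rcases fin2cases (e (T ω)) with h' | h'
        · exact Or.inl ⟨h, h'⟩
        · exact Or.inr ⟨h, h'⟩
      · rintro (⟨h, _⟩ | ⟨h, _⟩) <;> exact h
    have hdisj : Disjoint {ω | e ω = i ∧ e (T ω) = 0} {ω | e ω = i ∧ e (T ω) = 1} := by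
      rw [Set.disjoint_left]
      rintro ω ⟨_, h0⟩ ⟨_, h1⟩
      rw [h0] at h1
      exact absurd h1 (by decide)
    have hmeas1 : MeasurableSet {ω | e ω = i ∧ e (T ω) = 1} := by
      have : {ω | e ω = i ∧ e (T ω) = 1} = e ⁻¹' {i} ∩ (e ∘ T) ⁻¹' {1} := by
        ext ω; simp [Set.mem_inter_iff]
      rw [this]
      exact (he (measurableSet_singleton i)).inter ((he.comp hTm) (measurableSet_singleton 1))
    rw [hsplit, measure_union hdisj hmeas1, henv i 0, henv i 1,
      ← ENNReal.ofReal_add (mul_nonneg (hπnn i) (hPnn i 0)) (mul_nonneg (hπnn i) (hPnn i 1))]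
    congr 1
    have h1 : envP s i 0 + envP s i 1 = 1 := by
      fin_cases i <;> simp [envP] <;> ring
    rw [← mul_add, h1, mul_one]
  -- the integral of g
  haveI : IsProbabilityMeasure (μ.map e) := Measure.isProbabilityMeasure_map he.aemeasurable
  have hI : ∫ ω, g ω ∂μ
      = envPi s 0 * Real.log (lam 0) + envPi s 1 * Real.log (lam 1) := by
    rw [hgdef]
    rw [← MeasureTheory.integral_map he.aemeasurable
      (measurable_of_countable (fun i => Real.log (lam i))).aestronglyMeasurable]
    rw [MeasureTheory.integral_fintype (integrable_of_bounded'
      (C := Cg) inferInstance (measurable_of_countable _) (fun i => by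
        rcases fin2cases i with h | h <;> rw [h] <;>
          [linarith [abs_nonneg (Real.log (lam 1))]; linarith [abs_nonneg (Real.log (lam 0))]]))]
    rw [Fin.sum_univ_two, measureReal_def, measureReal_def]
    rw [MeasureTheory.Measure.map_apply he (measurableSet_singleton 0),
      MeasureTheory.Measure.map_apply he (measurableSet_singleton 1), hpre 0, hpre 1,
      ENNReal.toReal_ofReal (hπnn 0), ENNReal.toReal_ofReal (hπnn 1)]
    simp [smul_eq_mul]
  -- Birkhoff's theorem applied at T (T ω)
  have hBirk := birkhoff_ergodic hT hgmeas hCg0 hgbd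
  have hq := hT.toMeasurePreserving.quasiMeasurePreserving
  have hBirk2 : ∀ᵐ ω ∂μ, Filter.Tendsto (fun n => birkhoffSum T g n (T (T ω)) / n) atTop
      (𝓝 (∫ ω, g ω ∂μ)) := hq.ae (hq.ae hBirk)
  have hIval : ∫ ω, g ω ∂μ = (s 1 * Real.log (ma + w1 * (md / ma))
      + s 0 * Real.log (α * ma + w2 * (md / ma))) / (s 0 + s 1) := by
    rw [hI]
    have hl0 : lam 0 = ma + w1 * (md / ma) := by simp [hlamdef]
    have hl1 : lam 1 = α * ma + w2 * (md / ma) := by simp [hlamdef]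
    rw [hl0, hl1]
    have h0 : envPi s 0 = s 1 / (s 0 + s 1) := by simp [envPi]
    have h1 : envPi s 1 = s 0 / (s 0 + s 1) := by simp [envPi]
    rw [h0, h1]
    field_simp
  rw [← hIval]
  filter_upwards [hBirk2] with ω hω
  -- pointwise identification of the norm of the product
  have hform : ∀ m : ℕ,
      Real.log (matNorm (((List.range (m+1)).map (fun k => M (e (T^[k+1] ω)))).prod))
      = birkhoffSum T g m (T (T ω)) + Real.log (cN (e (T ω))) := by
    intro m
    have hmap : (List.range (m+1)).map (fun k => M (e (T^[k+1] ω)))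
        = ((e (T ω)) :: (List.range m).map (fun k => e (T^[k+2] ω))).map
            (fun i => (Matrix.of fun a b => uu i a * v b : Matrix (Fin 2) (Fin 2) ℝ)) := by
      rw [List.range_succ_eq_map, List.map_cons, List.map_map, List.map_cons, List.map_map]
      congr 1
      · simpa using hMR (e (T ω))
      · apply List.map_congr_left
        intro k _
        simp only [Function.comp_apply]
        rw [hMR]
    rw [hmap, rankOne_list_prod uu v lam hlam]
    have hrval : (((List.range m).map (fun k => e (T^[k+2] ω))).map lam).prod
        = ∏ k ∈ Finset.range m, lam (e (T^[k+2] ω)) := by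
      rw [List.map_map]
      exact list_prod_range_eq_finset m _
    have hrpos : 0 < (((List.range m).map (fun k => e (T^[k+2] ω))).map lam).prod := by
      rw [hrval]
      exact Finset.prod_pos fun k _ => hlampos _
    rw [matNorm_smul _ _ hrpos.le,
      Real.log_mul (ne_of_gt hrpos) (ne_of_gt (hcNpos (e (T ω)))), hrval,
      Real.log_prod (fun k _ => ne_of_gt (hlampos _))]
    congr 1
  -- final limit manipulation
  set x := T (T ω) with hx
  set K := Real.log (cN (e (T ω))) with hK
  set I := ∫ ω, g ω ∂μ with hIdef
  have hshift : Filter.Tendsto (fun m : ℕ => K / ((m:ℝ) + 1)) atTop (𝓝 0) := by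
    have h' := (tendsto_add_atTop_iff_nat 1).2 (tendsto_const_div_atTop_nhds_zero_nat K)
    simpa [Nat.cast_add] using h'
  have hratio : Filter.Tendsto (fun m : ℕ => (m:ℝ) / ((m:ℝ) + 1)) atTop (𝓝 1) :=
    tendsto_natCast_div_add_atTop (1:ℝ)
  have hmain := (hω.mul hratio).add hshift
  rw [mul_one, add_zero] at hmain
  have h2 : Filter.Tendsto (fun m : ℕ => (birkhoffSum T g m x + K) / ((m:ℝ) + 1)) atTop (𝓝 I) := by
    refine hmain.congr' ?_
    filter_upwards [eventually_ge_atTop 1] with m hm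
    have hm0 : (m:ℝ) ≠ 0 := by
      have : (0:ℝ) < m := by exact_mod_cast hm
      linarith
    have hm1 : (m:ℝ) + 1 ≠ 0 := by positivity
    field_simp
  rw [← tendsto_add_atTop_iff_nat 1]
  refine h2.congr fun m => ?_
  rw [hform m]
  norm_cast
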